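/- (Mixed extension theorem) For every simple measurable conditional mixed strategy σ_i : ΔA_{-i} → ΔA_i of player i, there exists a finitely supported probability measure μ over pure conditional strategies ŝ_i : ΔA_{-i} → A_i (measurable w.r.t. the Borel σ-algebra on ΔA_{-i}) such that for all q_{-i} ∈ ΔA_{-i} and all a_i ∈ A_i, σ_i(q_{-i})(a_i) = μ({ŝ_i : ŝ_i(q_{-i}) = a_i}); i.e., σ_i is induced by μ via ŝ ↦ ∫ ŝ_i(q_{-i}) dμ. -/

import Mathlib

namespace CondMixed

open scoped Classical

/-- The space `ΔA_{-i}` of mixed strategy profiles of the players other than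
`i`: the product of the standard simplices over the other players' action
sets. -/
def DeltaMinus {ι : Type*} (A : ι → Type*) [∀ j, Fintype (A j)] (i : ι) : Type _ :=
  ∀ j : {j : ι // j ≠ i}, (stdSimplex ℝ (A j.1) : Set (A j.1 → ℝ))

noncomputable instance {ι : Type*} (A : ι → Type*) [∀ j, Fintype (A j)] (i : ι) :
    TopologicalSpace (DeltaMinus A i) := by
  unfold DeltaMinus; infer_instance

/-- Mixed extension: every simple, Borel measurable conditional
mixed strategy `σ_i : ΔA_{-i} → ΔA_i` is induced by a finitely supported
probability measure over measurable pure conditional strategies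
`ŝ_i : ΔA_{-i} → A_i`: for all `q_{-i}` and `a_i`,
`σ_i(q_{-i})(a_i) = μ({ŝ_i : ŝ_i(q_{-i}) = a_i})`. -/
theorem mixed_extension {ι : Type*} (A : ι → Type*) [∀ j, Fintype (A j)]
    (i : ι) [Nonempty (A i)]
    [MeasurableSpace (DeltaMinus A i)] [BorelSpace (DeltaMinus A i)]
    (σ : DeltaMinus A i → (A i → ℝ))
    (hσΔ : ∀ q, σ q ∈ stdSimplex ℝ (A i))
    (hσsimple : (Set.range σ).Finite)
    (hσmeas : ∀ v : A i → ℝ, MeasurableSet (σ ⁻¹' {v})) :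
    ∃ (F : Finset (DeltaMinus A i → A i)) (w : (DeltaMinus A i → A i) → ℝ),
      (∀ s ∈ F, ∀ a : A i, MeasurableSet (s ⁻¹' {a})) ∧
      (∀ s ∈ F, 0 ≤ w s) ∧
      (∑ s ∈ F, w s) = 1 ∧
      ∀ (q : DeltaMinus A i) (a : A i),
        σ q a = ∑ s ∈ F.filter (fun s => s q = a), w s := by
  classical
  set V : Finset (A i → ℝ) := hσsimple.toFinset with hV
  have hmemV : ∀ q, σ q ∈ V := fun q => hσsimple.mem_toFinset.mpr ⟨q, rfl⟩
  -- each element of V is a probability vector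
  have hVsimplex : ∀ v ∈ V, v ∈ stdSimplex ℝ (A i) := by
    intro v hv
    obtain ⟨q, rfl⟩ := hσsimple.mem_toFinset.mp hv
    exact hσΔ q
  have hsum1 : ∀ v : {v // v ∈ V}, ∑ a, (v : A i → ℝ) a = 1 := fun v =>
    (hVsimplex v v.2).2
  have hnn : ∀ v : {v // v ∈ V}, ∀ a, 0 ≤ (v : A i → ℝ) a := fun v =>
    (hVsimplex v v.2).1
  let sFun : ({v // v ∈ V} → A i) → (DeltaMinus A i → A i) :=
    fun g q => g ⟨σ q, hmemV q⟩
  let p : ({v // v ∈ V} → A i) → ℝ := fun g => ∏ v : {v // v ∈ V}, (v : A i → ℝ) (g v)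
  have hp : ∀ g, 0 ≤ p g := fun g => Finset.prod_nonneg fun v _ => hnn v (g v)
  refine ⟨Finset.image sFun Finset.univ,
    fun s => ∑ g ∈ Finset.univ.filter (fun g => sFun g = s), p g, ?_, ?_, ?_, ?_⟩
  · -- measurability
    intro s hs a
    obtain ⟨g, -, rfl⟩ := Finset.mem_image.mp hs
    have : sFun g ⁻¹' {a} =
        ⋃ v ∈ V.attach.filter (fun v => g v = a), σ ⁻¹' {(v : A i → ℝ)} := by
      ext q
      simp only [Set.mem_preimage, Set.mem_singleton_iff, Set.mem_iUnion,
        Finset.mem_filter, Finset.mem_attach, true_and]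
      constructor
      · intro h
        exact ⟨⟨σ q, hmemV q⟩, h, rfl⟩
      · rintro ⟨v, hv, hq⟩
        have : (⟨σ q, hmemV q⟩ : {v // v ∈ V}) = v := Subtype.ext hq
        simpa [sFun, this] using hv
    rw [this]
    exact (V.attach.filter (fun v => g v = a)).measurableSet_biUnion
      fun v _ => hσmeas v
  · -- nonnegativity
    intro s hs
    exact Finset.sum_nonneg fun g _ => hp g
  · -- total mass one
    dsimp only
    have fib : ∑ s ∈ Finset.image sFun Finset.univ,
        ∑ g ∈ Finset.univ.filter (fun g => sFun g = s), p g =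
        ∑ g ∈ Finset.univ.filter (fun g => sFun g ∈ Finset.image sFun Finset.univ), p g :=
      Finset.sum_fiberwise_eq_sum_filter _ _ _ _
    rw [fib]
    have hfull : (Finset.univ.filter fun g =>
        sFun g ∈ Finset.image sFun Finset.univ) = Finset.univ := by
      apply Finset.filter_true_of_mem
      intro g _
      exact Finset.mem_image_of_mem _ (Finset.mem_univ g)
    rw [hfull]
    have := Finset.prod_univ_sum (fun _ : {v // v ∈ V} => (Finset.univ : Finset (A i)))
      (fun v b => (v : A i → ℝ) b)
    rw [Fintype.piFinset_univ] at this
    rw [← this]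
    simp only [hsum1, Finset.prod_const_one]
  · -- the induced strategy equals σ
    intro q a
    dsimp only
    have fib : ∑ s ∈ (Finset.image sFun Finset.univ).filter (fun s => s q = a),
        ∑ g ∈ Finset.univ.filter (fun g => sFun g = s), p g =
        ∑ g ∈ Finset.univ.filter
          (fun g => sFun g ∈ (Finset.image sFun Finset.univ).filter (fun s => s q = a)), p g :=
      Finset.sum_fiberwise_eq_sum_filter _ _ _ _
    rw [fib]
    set v0 : {v // v ∈ V} := ⟨σ q, hmemV q⟩ with hv0
    have hcond : (Finset.univ.filter fun g =>
        sFun g ∈ (Finset.image sFun Finset.univ).filter fun s => s q = a) =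
        Finset.univ.filter fun g => g v0 = a := by
      apply Finset.filter_congr
      intro g _
      simp only [Finset.mem_filter]
      constructor
      · rintro ⟨-, h⟩; exact h
      · intro h
        exact ⟨Finset.mem_image_of_mem _ (Finset.mem_univ g), h⟩
    rw [hcond]
    -- now compute the marginal
    have key := Finset.prod_univ_sum
      (fun v : {v // v ∈ V} => if v = v0 then ({a} : Finset (A i)) else Finset.univ)
      (fun v b => (v : A i → ℝ) b)
    have hpi : Fintype.piFinset
        (fun v : {v // v ∈ V} => if v = v0 then ({a} : Finset (A i)) else Finset.univ) =
        Finset.univ.filter fun g => g v0 = a := by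
      ext g
      simp only [Fintype.mem_piFinset, Finset.mem_filter, Finset.mem_univ, true_and]
      constructor
      · intro h
        have := h v0
        simpa using this
      · intro h v
        by_cases hv : v = v0 <;> simp [hv, h]
    rw [hpi] at key
    rw [← key]
    have : ∀ v : {v // v ∈ V},
        (∑ b ∈ (if v = v0 then ({a} : Finset (A i)) else Finset.univ), (v : A i → ℝ) b) =
        if v = v0 then σ q a else 1 := by
      intro v
      by_cases hv : v = v0
      · simp [hv, hsum1, hv0]
      · rw [if_neg hv, if_neg hv]; exact hsum1 v
    rw [Finset.prod_congr rfl fun v _ => this v]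
    simp

end CondMixed
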